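/- The function ξ(ρ) := ∫_{ℝ^N} f(w(x))·w(x + ρe₁) dx is differentiable on (0, ∞) with ξ'(ρ) = ∫_{ℝ^N} f(w(x))·W'(|x + ρe₁|)·(x₁ + ρ)/|x + ρe₁| dx, and ξ'(ρ)/W'(ρ) → ∫_{ℝ^N} f(w(x))·e^{−x₁} dx as ρ → +∞. -/

import Mathlib

open Filter Set Real MeasureTheory
open scoped RealInnerProductSpace

theorem aux_integrable_exp (N : ℕ) (c : ℝ) (hc : 0 < c) :
    Integrable (fun x : EuclideanSpace ℝ (Fin N) => Real.exp (-c * ‖x‖)) := by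
  have hd : (Module.finrank ℝ (EuclideanSpace ℝ (Fin N)) : ℝ) < (N + 1 : ℝ) := by
    rw [finrank_euclideanSpace, Fintype.card_fin]; exact lt_add_one _
  have hint := (integrable_one_add_norm (E := EuclideanSpace ℝ (Fin N)) (μ := volume)
    (r := (N+1:ℝ)) hd).const_mul (((N+1 : ℝ)/c)^(N+1) * Real.exp c)
  refine hint.mono' (Continuous.aestronglyMeasurable (by continuity)) ?_
  filter_upwards with x
  set t := ‖x‖
  have ht : 0 ≤ t := norm_nonneg _
  rw [Real.norm_eq_abs, abs_of_nonneg (Real.exp_nonneg _)]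
  have h1t : (0:ℝ) < 1 + t := by linarith
  have key : (1+t)^(N+1) ≤ ((N+1:ℝ)/c)^(N+1) * Real.exp c * Real.exp (c*t) := by
    have h0 : (c/(N+1:ℝ)) * (1+t) ≤ Real.exp ((c/(N+1:ℝ)) * (1+t)) := by
      linarith [Real.add_one_le_exp ((c/(N+1:ℝ)) * (1+t))]
    have h1 : (1+t) ≤ ((N+1:ℝ)/c) * Real.exp ((c/(N+1:ℝ)) * (1+t)) := by
      have h2 := mul_le_mul_of_nonneg_left h0
        (le_of_lt (show (0:ℝ) < (N+1:ℝ)/c by positivity))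
      calc (1+t) = ((N+1:ℝ)/c) * ((c/(N+1:ℝ)) * (1+t)) := by field_simp
        _ ≤ _ := h2
    calc (1+t)^(N+1) ≤ (((N+1:ℝ)/c) * Real.exp ((c/(N+1:ℝ)) * (1+t)))^(N+1) :=
          pow_le_pow_left₀ (by linarith) h1 _
      _ = ((N+1:ℝ)/c)^(N+1) * Real.exp ((c/(N+1:ℝ)) * (1+t)) ^ (N+1) := by rw [mul_pow]
      _ = ((N+1:ℝ)/c)^(N+1) * Real.exp ((N+1:ℕ) * ((c/(N+1:ℝ)) * (1+t))) := by
          rw [← Real.exp_nat_mul]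
      _ = ((N+1:ℝ)/c)^(N+1) * Real.exp (c * (1+t)) := by
          congr 2; push_cast; field_simp
      _ = ((N+1:ℝ)/c)^(N+1) * Real.exp c * Real.exp (c*t) := by
          rw [mul_assoc, ← Real.exp_add]; ring_nf
  have hpow : (1+t) ^ (-(N+1:ℝ)) = ((1+t)^(N+1))⁻¹ := by
    rw [Real.rpow_neg (le_of_lt h1t), ← Real.rpow_natCast (1+t) (N+1)]
    norm_num
  have hb : (0:ℝ) < (1+t)^(N+1) := by positivity
  rw [hpow, ← div_eq_mul_inv, le_div_iff₀ hb, neg_mul]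
  calc Real.exp (-(c*t)) * (1+t)^(N+1)
      ≤ Real.exp (-(c*t)) * (((N+1:ℝ)/c)^(N+1) * Real.exp c * Real.exp (c*t)) :=
        mul_le_mul_of_nonneg_left key (Real.exp_nonneg _)
    _ = ((N+1:ℝ)/c)^(N+1) * Real.exp c := by
        rw [mul_comm, mul_assoc, ← Real.exp_add]; simp

section
variable {N : ℕ} (i₀ : Fin N)

theorem aux_inner_single (x : EuclideanSpace ℝ (Fin N)) :
    ⟪x, EuclideanSpace.single i₀ (1:ℝ)⟫ = x i₀ := by
  rw [EuclideanSpace.inner_single_right]; simp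

theorem aux_normsq (x : EuclideanSpace ℝ (Fin N)) (τ : ℝ) :
    ‖x + τ • EuclideanSpace.single i₀ (1:ℝ)‖^2 = ‖x‖^2 + 2*τ*(x i₀) + τ^2 := by
  rw [norm_add_sq_real, inner_smul_right, aux_inner_single, norm_smul,
    EuclideanSpace.norm_single]
  simp [mul_pow]
  ring

theorem aux_coord_le (x : EuclideanSpace ℝ (Fin N)) (τ : ℝ) :
    |x i₀ + τ| ≤ ‖x + τ • EuclideanSpace.single i₀ (1:ℝ)‖ := by
  have h := abs_real_inner_le_norm (x + τ • EuclideanSpace.single i₀ (1:ℝ))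
    (EuclideanSpace.single i₀ (1:ℝ))
  rw [inner_add_left, inner_smul_left, aux_inner_single] at h
  have : ⟪EuclideanSpace.single i₀ (1:ℝ), EuclideanSpace.single i₀ (1:ℝ)⟫ = (1:ℝ) := by
    rw [EuclideanSpace.inner_single_right]; simp [EuclideanSpace.single_apply]
  rw [this] at h
  simpa using h

theorem aux_norm_lb (x : EuclideanSpace ℝ (Fin N)) (τ : ℝ) (hτ : 0 ≤ τ) :
    τ - ‖x‖ ≤ ‖x + τ • EuclideanSpace.single i₀ (1:ℝ)‖ := by
  have h : ‖τ • EuclideanSpace.single i₀ (1:ℝ)‖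
      ≤ ‖x + τ • EuclideanSpace.single i₀ (1:ℝ)‖ + ‖x‖ := by
    calc ‖τ • EuclideanSpace.single i₀ (1:ℝ)‖
        = ‖(x + τ • EuclideanSpace.single i₀ (1:ℝ)) - x‖ := by congr 1; abel
      _ ≤ _ := norm_sub_le _ _
  rw [norm_smul, EuclideanSpace.norm_single] at h
  simp only [Real.norm_eq_abs, abs_of_nonneg hτ, norm_one, mul_one] at h
  linarith
end

theorem aux_norm_eq_sqrt {N : ℕ} (i₀ : Fin N) (x : EuclideanSpace ℝ (Fin N)) (τ : ℝ) :
    ‖x + τ • EuclideanSpace.single i₀ (1:ℝ)‖ = Real.sqrt (‖x‖^2 + 2*τ*(x i₀) + τ^2) := by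
  rw [← aux_normsq i₀ x τ, Real.sqrt_sq (norm_nonneg _)]

theorem aux_hasDerivAt_norm {N : ℕ} (i₀ : Fin N) (x : EuclideanSpace ℝ (Fin N)) (τ : ℝ)
    (h : ‖x + τ • EuclideanSpace.single i₀ (1:ℝ)‖ ≠ 0) :
    HasDerivAt (fun s : ℝ => ‖x + s • EuclideanSpace.single i₀ (1:ℝ)‖)
      ((x i₀ + τ) / ‖x + τ • EuclideanSpace.single i₀ (1:ℝ)‖) τ := by
  set r := ‖x + τ • EuclideanSpace.single i₀ (1:ℝ)‖ with hr
  have hq : HasDerivAt (fun s : ℝ => ‖x‖^2 + 2*s*(x i₀) + s^2) (2*(x i₀) + 2*τ) τ := by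
    have h1 : HasDerivAt (fun s : ℝ => ‖x‖^2 + 2*s*(x i₀) + s^2)
        (0 + 2*1*(x i₀) + (2:ℕ)*τ^(2-1)) τ :=
      ((hasDerivAt_const τ (‖x‖^2)).add
        (((hasDerivAt_id τ).const_mul 2).mul_const (x i₀))).add
        (hasDerivAt_pow 2 τ)
    convert h1 using 1; push_cast; ring
  have hqτ : ‖x‖^2 + 2*τ*(x i₀) + τ^2 ≠ 0 := by
    rw [← aux_normsq i₀ x τ]; exact pow_ne_zero _ h
  have hsq := (Real.hasDerivAt_sqrt hqτ).comp τ hq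
  have heq : (fun s : ℝ => Real.sqrt (‖x‖^2 + 2*s*(x i₀) + s^2))
      = fun s : ℝ => ‖x + s • EuclideanSpace.single i₀ (1:ℝ)‖ := by
    funext s; rw [aux_norm_eq_sqrt]
  rw [show ((fun x => Real.sqrt x) ∘ fun s => ‖x‖^2 + 2*s*(x i₀) + s^2)
      = fun s : ℝ => Real.sqrt (‖x‖^2 + 2*s*(x i₀) + s^2) from rfl, heq] at hsq
  refine hsq.congr_deriv ?_
  rw [← aux_norm_eq_sqrt]
  field_simp [hr]
  rw [← hr, mul_div_cancel_right₀ _ h]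

noncomputable section

variable {N : ℕ}

local notation "E" => EuclideanSpace ℝ (Fin N)

set_option maxHeartbeats 2000000 in
theorem main_aux (N : ℕ) (hN : 2 ≤ N) (i₀ : Fin N)
    (W : ℝ → ℝ) (hW_cont : ContinuousOn W (Ici 0))
    (hW_pos : ∀ r ∈ Ici (0 : ℝ), 0 < W r)
    (hW_C1 : ContDiffOn ℝ 1 W (Ioi 0))
    (hW'_bdd : ∃ C, ∀ r ∈ Ioi (0 : ℝ), |deriv W r| ≤ C)
    (A : ℝ) (hA : 0 < A)
    (hW_asym : Tendsto (fun r => r ^ (((N : ℝ) - 1) / 2) * Real.exp r * W r) atTop (nhds A))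
    (hW'_asym : Tendsto (fun r => r ^ (((N : ℝ) - 1) / 2) * Real.exp r * deriv W r) atTop
      (nhds (-A)))
    (w : EuclideanSpace ℝ (Fin N) → ℝ) (hw : ∀ x, w x = W ‖x‖)
    (f : ℝ → ℝ) (hf_cont : Continuous f)
    (C₀ σ : ℝ) (hC₀ : 0 < C₀) (hσ : 0 < σ)
    (hf_bound : ∀ t : ℝ, |t| ≤ sSup (W '' Ici 0) → |f t| ≤ C₀ * |t| ^ (1 + σ)) :
    (∀ ρ : ℝ, 0 < ρ →
      HasDerivAt (fun τ : ℝ => ∫ x : EuclideanSpace ℝ (Fin N),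
            f (w x) * w (x + τ • EuclideanSpace.single i₀ (1:ℝ)))
        (∫ x : EuclideanSpace ℝ (Fin N),
          f (w x) * deriv W ‖x + ρ • EuclideanSpace.single i₀ (1:ℝ)‖ *
            ((x i₀ + ρ) / ‖x + ρ • EuclideanSpace.single i₀ (1:ℝ)‖)) ρ) ∧
    Tendsto (fun ρ : ℝ => (∫ x : EuclideanSpace ℝ (Fin N),
          f (w x) * deriv W ‖x + ρ • EuclideanSpace.single i₀ (1:ℝ)‖ *
            ((x i₀ + ρ) / ‖x + ρ • EuclideanSpace.single i₀ (1:ℝ)‖)) / deriv W ρ)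
      atTop (nhds (∫ x : EuclideanSpace ℝ (Fin N), f (w x) * Real.exp (-(x i₀)))) := by
  obtain ⟨C, hC⟩ := hW'_bdd
  set α : ℝ := ((N : ℝ) - 1) / 2 with hαdef
  have hα : 0 < α := by
    have : (2:ℝ) ≤ (N:ℝ) := by exact_mod_cast hN
    simp only [hαdef]; linarith
  have hC0 : 0 ≤ C := le_trans (abs_nonneg _) (hC 1 (by norm_num))
  -- asymptotic regime
  have hev : ∀ᶠ s in atTop, (|s ^ α * Real.exp s * W s - A| < A/2 ∧
      |s ^ α * Real.exp s * deriv W s - (-A)| < A/2) ∧ 1 ≤ s := by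
    have h1 := Metric.tendsto_nhds.mp hW_asym (A/2) (by linarith)
    have h2 := Metric.tendsto_nhds.mp hW'_asym (A/2) (by linarith)
    filter_upwards [h1, h2, eventually_ge_atTop (1:ℝ)] with s hs1 hs2 hs3
    rw [Real.dist_eq] at hs1 hs2
    exact ⟨⟨hs1, hs2⟩, hs3⟩
  obtain ⟨R₀, hR₀⟩ := eventually_atTop.mp hev
  have hR₀1 : 1 ≤ R₀ := (hR₀ R₀ le_rfl).2
  -- basic positivity for s ≥ R₀
  have hspos : ∀ s : ℝ, R₀ ≤ s → 0 < s ^ α * Real.exp s := by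
    intro s hs
    have h1 : (1:ℝ) ≤ s := le_trans hR₀1 hs
    positivity
  have hsge1 : ∀ s : ℝ, R₀ ≤ s → 1 ≤ s ^ α * Real.exp s := by
    intro s hs
    have h1 : (1:ℝ) ≤ s := le_trans hR₀1 hs
    have := Real.one_le_rpow h1 hα.le
    nlinarith [Real.one_le_exp (by linarith : (0:ℝ) ≤ s)]
  have hinv : ∀ s : ℝ, R₀ ≤ s → s ^ (-α) * Real.exp (-s) = (s ^ α * Real.exp s)⁻¹ := by
    intro s hs
    rw [Real.rpow_neg (by linarith [le_trans hR₀1 hs] : (0:ℝ) ≤ s), Real.exp_neg, mul_inv]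
  -- upper bound for W in the asymptotic regime
  have hWub : ∀ s : ℝ, R₀ ≤ s → W s ≤ (3*A/2) * Real.exp (-s) := by
    intro s hs
    have h := ((hR₀ s hs).1).1
    have hpos := hspos s hs
    have h1 : (1:ℝ) ≤ s := le_trans hR₀1 hs
    have hW := hW_pos s (mem_Ici.mpr (by linarith))
    rw [abs_lt] at h
    have hsa : (1:ℝ) ≤ s ^ α := Real.one_le_rpow h1 hα.le
    have hexp : 0 < Real.exp s := Real.exp_pos s
    have h2 : Real.exp s * W s ≤ 3*A/2 := by nlinarith
    have h3 := mul_le_mul_of_nonneg_left h2 (inv_nonneg.mpr hexp.le)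
    rw [Real.exp_neg]
    calc W s = (Real.exp s)⁻¹ * (Real.exp s * W s) := by
          field_simp
      _ ≤ (Real.exp s)⁻¹ * (3*A/2) := h3
      _ = 3*A/2 * (Real.exp s)⁻¹ := by ring
  -- bounds on |deriv W| in the asymptotic regime
  have hXbnd : ∀ s : ℝ, R₀ ≤ s → A/2 ≤ |s ^ α * Real.exp s * deriv W s| ∧
      |s ^ α * Real.exp s * deriv W s| ≤ 3*A/2 := by
    intro s hs
    have h := ((hR₀ s hs).1).2
    rw [sub_neg_eq_add, abs_lt] at h
    have hneg : s ^ α * Real.exp s * deriv W s < 0 := by linarith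
    rw [abs_of_neg hneg]
    constructor <;> linarith
  have hW'abs : ∀ s : ℝ, R₀ ≤ s →
      |deriv W s| = |s ^ α * Real.exp s * deriv W s| * (s ^ (-α) * Real.exp (-s)) := by
    intro s hs
    have hpos := hspos s hs
    rw [hinv s hs, abs_mul, abs_of_pos hpos]
    field_simp
    rw [mul_div_assoc, div_self (Real.rpow_pos_of_pos (by linarith [le_trans hR₀1 hs]) α).ne', mul_one]
  have hW'ub : ∀ s : ℝ, R₀ ≤ s → |deriv W s| ≤ (3*A/2) * (s ^ (-α) * Real.exp (-s)) := by
    intro s hs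
    rw [hW'abs s hs]
    exact mul_le_mul_of_nonneg_right (hXbnd s hs).2
      (mul_nonneg (Real.rpow_nonneg (by linarith [le_trans hR₀1 hs]) _) (Real.exp_nonneg _))
  have hW'lb : ∀ s : ℝ, R₀ ≤ s → (A/2) * (s ^ (-α) * Real.exp (-s)) ≤ |deriv W s| := by
    intro s hs
    rw [hW'abs s hs]
    exact mul_le_mul_of_nonneg_right (hXbnd s hs).1
      (mul_nonneg (Real.rpow_nonneg (by linarith [le_trans hR₀1 hs]) _) (Real.exp_nonneg _))
  have hrpow_le_one : ∀ s : ℝ, R₀ ≤ s → s ^ (-α) ≤ 1 := by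
    intro s hs
    exact Real.rpow_le_one_of_one_le_of_nonpos (le_trans hR₀1 hs) (by linarith)
  -- compact bound and global exponential bounds
  obtain ⟨Cb, hCb⟩ := (isCompact_Icc (a := (0:ℝ)) (b := R₀)).exists_bound_of_continuousOn
    (hW_cont.mono (fun s hs => hs.1))
  have hCb0 : 0 ≤ Cb := le_trans (norm_nonneg _) (hCb 0 ⟨le_rfl, by linarith⟩)
  set K : ℝ := max (3*A/2) ((Cb+1) * Real.exp R₀) with hKdef
  have hK0 : 0 < K := lt_of_lt_of_le (by linarith) (le_max_left _ _)
  have hK : ∀ s : ℝ, 0 ≤ s → W s ≤ K * Real.exp (-s) := by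
    intro s hs
    rcases le_or_gt R₀ s with h | h
    · exact le_trans (hWub s h) (mul_le_mul_of_nonneg_right (le_max_left _ _)
        (Real.exp_nonneg _))
    · have h1 : W s ≤ Cb := by
        have := hCb s ⟨hs, h.le⟩
        rw [Real.norm_eq_abs] at this
        exact le_trans (le_abs_self _) this
      have h2 : (1:ℝ) ≤ Real.exp R₀ * Real.exp (-s) := by
        rw [← Real.exp_add]
        exact Real.one_le_exp (by linarith)
      calc W s ≤ Cb := h1
        _ ≤ (Cb+1) * (Real.exp R₀ * Real.exp (-s)) := by nlinarith
        _ = (Cb+1) * Real.exp R₀ * Real.exp (-s) := by ring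
        _ ≤ K * Real.exp (-s) := mul_le_mul_of_nonneg_right (le_max_right _ _)
            (Real.exp_nonneg _)
  set C' : ℝ := max (3*A/2) (C * Real.exp R₀) with hC'def
  have hC'0 : 0 < C' := lt_of_lt_of_le (by linarith) (le_max_left _ _)
  have hC' : ∀ s : ℝ, 0 < s → |deriv W s| ≤ C' * Real.exp (-s) := by
    intro s hs
    rcases le_or_gt R₀ s with h | h
    · calc |deriv W s| ≤ (3*A/2) * (s ^ (-α) * Real.exp (-s)) := hW'ub s h
        _ ≤ (3*A/2) * (1 * Real.exp (-s)) :=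
            mul_le_mul_of_nonneg_left (mul_le_mul_of_nonneg_right (hrpow_le_one s h)
              (Real.exp_nonneg _)) (by linarith)
        _ = (3*A/2) * Real.exp (-s) := by ring
        _ ≤ C' * Real.exp (-s) := mul_le_mul_of_nonneg_right (le_max_left _ _)
            (Real.exp_nonneg _)
    · have h2 : (1:ℝ) ≤ Real.exp R₀ * Real.exp (-s) := by
        rw [← Real.exp_add]
        exact Real.one_le_exp (by linarith)
      calc |deriv W s| ≤ C := hC s hs
        _ ≤ C * (Real.exp R₀ * Real.exp (-s)) := by nlinarith
        _ = C * Real.exp R₀ * Real.exp (-s) := by ring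
        _ ≤ C' * Real.exp (-s) := mul_le_mul_of_nonneg_right (le_max_right _ _)
            (Real.exp_nonneg _)
  -- bound for |f ∘ w|
  have hBdd : BddAbove (W '' Ici 0) := by
    refine ⟨K, fun y hy => ?_⟩
    obtain ⟨s, hs, rfl⟩ := hy
    calc W s ≤ K * Real.exp (-s) := hK s hs
      _ ≤ K * 1 := mul_le_mul_of_nonneg_left (Real.exp_le_one_iff.mpr (by
          simpa using hs)) hK0.le
      _ = K := mul_one K
  set C₁ : ℝ := C₀ * K ^ (1+σ) with hC₁def
  have hC₁ : 0 < C₁ := by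
    have := Real.rpow_pos_of_pos hK0 (1+σ)
    positivity
  have hfw : ∀ x : EuclideanSpace ℝ (Fin N), |f (W ‖x‖)| ≤ C₁ * Real.exp (-((1+σ) * ‖x‖)) := by
    intro x
    have hn : (0:ℝ) ≤ ‖x‖ := norm_nonneg _
    have hWx : 0 < W ‖x‖ := hW_pos _ (mem_Ici.mpr hn)
    have h1 : |W ‖x‖| ≤ sSup (W '' Ici 0) :=
      le_trans (le_of_eq (abs_of_pos hWx)) (le_csSup hBdd (mem_image_of_mem W (mem_Ici.mpr hn)))
    have h2 := hf_bound _ h1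
    have h3 : |W ‖x‖| ^ (1+σ) ≤ (K * Real.exp (-‖x‖)) ^ (1+σ) := by
      apply Real.rpow_le_rpow (abs_nonneg _) _ (by linarith)
      rw [abs_of_pos hWx]
      exact hK _ hn
    have h4 : (K * Real.exp (-‖x‖)) ^ (1+σ) = K ^ (1+σ) * Real.exp (-((1+σ) * ‖x‖)) := by
      rw [Real.mul_rpow hK0.le (Real.exp_nonneg _), ← Real.exp_mul]
      ring_nf
    calc |f (W ‖x‖)| ≤ C₀ * |W ‖x‖| ^ (1+σ) := h2
      _ ≤ C₀ * (K * Real.exp (-‖x‖)) ^ (1+σ) := mul_le_mul_of_nonneg_left h3 hC₀.le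
      _ = C₁ * Real.exp (-((1+σ) * ‖x‖)) := by rw [h4, hC₁def]; ring
  -- continuity and measurability
  have hWn_cont : Continuous fun x : EuclideanSpace ℝ (Fin N) => W ‖x‖ :=
    hW_cont.comp_continuous continuous_norm (fun x => mem_Ici.mpr (norm_nonneg x))
  have hfw_cont : Continuous fun x : EuclideanSpace ℝ (Fin N) => f (W ‖x‖) :=
    hf_cont.comp hWn_cont
  have hmeasF' : ∀ ρ : ℝ, AEStronglyMeasurable (fun x : EuclideanSpace ℝ (Fin N) =>
      f (W ‖x‖) * deriv W ‖x + ρ • EuclideanSpace.single i₀ (1:ℝ)‖ *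
        ((x i₀ + ρ) / ‖x + ρ • EuclideanSpace.single i₀ (1:ℝ)‖)) volume := by
    intro ρ
    have hnc : Continuous fun x : EuclideanSpace ℝ (Fin N) =>
        ‖x + ρ • EuclideanSpace.single i₀ (1:ℝ)‖ :=
      (continuous_id.add continuous_const).norm
    have h1 : Measurable fun x : EuclideanSpace ℝ (Fin N) =>
        deriv W ‖x + ρ • EuclideanSpace.single i₀ (1:ℝ)‖ :=
      (measurable_deriv W).comp hnc.measurable
    have h2 : Measurable fun x : EuclideanSpace ℝ (Fin N) =>
        (x i₀ + ρ) / ‖x + ρ • EuclideanSpace.single i₀ (1:ℝ)‖ := by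
      apply Measurable.div
      · exact ((EuclideanSpace.proj i₀ : EuclideanSpace ℝ (Fin N) →L[ℝ] ℝ).continuous.add continuous_const).measurable
      · exact hnc.measurable
    exact ((hfw_cont.measurable.mul h1).mul h2).aestronglyMeasurable
  -- the exceptional null set
  have hae : ∀ᵐ x : EuclideanSpace ℝ (Fin N) ∂volume,
      ∀ τ : ℝ, x + τ • EuclideanSpace.single i₀ (1:ℝ) ≠ 0 := by
    set e : EuclideanSpace ℝ (Fin N) := EuclideanSpace.single i₀ (1:ℝ) with hedef
    haveI : Nontrivial (Fin N) := ⟨⟨⟨0, by omega⟩, ⟨1, by omega⟩, by simp [Fin.ext_iff]⟩⟩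
    obtain ⟨j, hj⟩ := exists_ne i₀
    have hLne : (ℝ ∙ e) ≠ (⊤ : Submodule ℝ (EuclideanSpace ℝ (Fin N))) := by
      intro h
      have hjmem : EuclideanSpace.single j (1:ℝ) ∈ (ℝ ∙ e) := by rw [h]; trivial
      obtain ⟨c, hc⟩ := Submodule.mem_span_singleton.mp hjmem
      have h2 := congrFun (congrArg (fun v : EuclideanSpace ℝ (Fin N) => (v : Fin N → ℝ)) hc) j
      simp only [hedef] at h2
      rw [show ((c • EuclideanSpace.single i₀ (1:ℝ) : EuclideanSpace ℝ (Fin N)) : Fin N → ℝ) j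
        = c * (EuclideanSpace.single i₀ (1:ℝ) : EuclideanSpace ℝ (Fin N)) j from rfl] at h2
      rw [EuclideanSpace.single_apply, EuclideanSpace.single_apply] at h2
      simp [hj, if_neg (Ne.symm hj)] at h2
    have h0 : volume ((ℝ ∙ e : Submodule ℝ (EuclideanSpace ℝ (Fin N))) :
        Set (EuclideanSpace ℝ (Fin N))) = 0 :=
      Measure.addHaar_submodule _ _ hLne
    have h1 := measure_eq_zero_iff_ae_notMem.mp h0
    filter_upwards [h1] with x hx τ hcontra
    apply hx
    have hx2 : x = (-τ) • e := by
      rw [neg_smul]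
      exact eq_neg_of_add_eq_zero_left hcontra
    rw [hx2]
    exact Submodule.smul_mem _ _ (Submodule.mem_span_singleton_self e)
  -- integrability of the exponential bound
  have hInt : ∀ c : ℝ, 0 < c →
      Integrable (fun x : EuclideanSpace ℝ (Fin N) => Real.exp (-(c * ‖x‖))) volume := by
    intro c hc
    have := aux_integrable_exp N c hc
    simpa [neg_mul] using this
  have hWnorm_cont : ∀ ρ : ℝ, Continuous fun x : EuclideanSpace ℝ (Fin N) =>
      W ‖x + ρ • EuclideanSpace.single i₀ (1:ℝ)‖ := fun ρ =>
    hW_cont.comp_continuous ((continuous_id.add continuous_const).norm)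
      (fun x => mem_Ici.mpr (norm_nonneg _))
  simp only [hw]
  constructor
  · -- Part 1 : differentiation under the integral sign
    intro ρ hρ
    have h1 : ∀ᶠ τ : ℝ in nhds ρ, AEStronglyMeasurable
        (fun x : EuclideanSpace ℝ (Fin N) =>
          f (W ‖x‖) * W ‖x + τ • EuclideanSpace.single i₀ (1:ℝ)‖) volume :=
      Eventually.of_forall fun τ => (hfw_cont.mul (hWnorm_cont τ)).aestronglyMeasurable
    have h2 : Integrable (fun x : EuclideanSpace ℝ (Fin N) =>
        f (W ‖x‖) * W ‖x + ρ • EuclideanSpace.single i₀ (1:ℝ)‖) volume := by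
      apply Integrable.mono' ((hInt (1+σ) (by linarith)).const_mul (C₁ * K))
        (hfw_cont.mul (hWnorm_cont ρ)).aestronglyMeasurable
      filter_upwards with x
      have hr0 : (0:ℝ) ≤ ‖x + ρ • EuclideanSpace.single i₀ (1:ℝ)‖ := norm_nonneg _
      have hWr := hW_pos _ (mem_Ici.mpr hr0)
      have hWK : W ‖x + ρ • EuclideanSpace.single i₀ (1:ℝ)‖ ≤ K := by
        calc W ‖x + ρ • EuclideanSpace.single i₀ (1:ℝ)‖
            ≤ K * Real.exp (-‖x + ρ • EuclideanSpace.single i₀ (1:ℝ)‖) := hK _ hr0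
          _ ≤ K * 1 := mul_le_mul_of_nonneg_left (Real.exp_le_one_iff.mpr (by linarith)) hK0.le
          _ = K := mul_one K
      rw [Real.norm_eq_abs, Pi.mul_apply, abs_mul]
      calc |f (W ‖x‖)| * |W ‖x + ρ • EuclideanSpace.single i₀ (1:ℝ)‖|
          ≤ (C₁ * Real.exp (-((1+σ) * ‖x‖))) * K := by
            apply mul_le_mul (hfw x) _ (abs_nonneg _) (by positivity)
            rw [abs_of_pos hWr]; exact hWK
        _ = C₁ * K * Real.exp (-((1+σ) * ‖x‖)) := by ring
    have h4 : ∀ᵐ x : EuclideanSpace ℝ (Fin N) ∂volume, ∀ τ ∈ Metric.ball ρ 1,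
        ‖f (W ‖x‖) * deriv W ‖x + τ • EuclideanSpace.single i₀ (1:ℝ)‖ *
          ((x i₀ + τ) / ‖x + τ • EuclideanSpace.single i₀ (1:ℝ)‖)‖
          ≤ C₁ * Real.exp (-((1+σ) * ‖x‖)) * C := by
      filter_upwards [hae] with x hx τ _
      have hr : 0 < ‖x + τ • EuclideanSpace.single i₀ (1:ℝ)‖ := norm_pos_iff.mpr (hx τ)
      have hq : |(x i₀ + τ) / ‖x + τ • EuclideanSpace.single i₀ (1:ℝ)‖| ≤ 1 := by
        rw [abs_div, abs_of_pos hr, div_le_one hr]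
        exact aux_coord_le i₀ x τ
      have hWC : |deriv W ‖x + τ • EuclideanSpace.single i₀ (1:ℝ)‖| ≤ C := hC _ hr
      rw [Real.norm_eq_abs, abs_mul, abs_mul]
      calc |f (W ‖x‖)| * |deriv W ‖x + τ • EuclideanSpace.single i₀ (1:ℝ)‖| *
            |(x i₀ + τ) / ‖x + τ • EuclideanSpace.single i₀ (1:ℝ)‖|
          ≤ |f (W ‖x‖)| * |deriv W ‖x + τ • EuclideanSpace.single i₀ (1:ℝ)‖| * 1 :=
            mul_le_mul_of_nonneg_left hq (by positivity)
        _ = |f (W ‖x‖)| * |deriv W ‖x + τ • EuclideanSpace.single i₀ (1:ℝ)‖| := mul_one _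
        _ ≤ (C₁ * Real.exp (-((1+σ) * ‖x‖))) * C :=
            mul_le_mul (hfw x) hWC (abs_nonneg _) (by positivity)
    have h5 : Integrable (fun x : EuclideanSpace ℝ (Fin N) =>
        C₁ * Real.exp (-((1+σ) * ‖x‖)) * C) volume :=
      ((hInt (1+σ) (by linarith)).const_mul C₁).mul_const C
    have h6 : ∀ᵐ x : EuclideanSpace ℝ (Fin N) ∂volume, ∀ τ ∈ Metric.ball ρ 1,
        HasDerivAt (fun τ' : ℝ => f (W ‖x‖) * W ‖x + τ' • EuclideanSpace.single i₀ (1:ℝ)‖)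
          (f (W ‖x‖) * deriv W ‖x + τ • EuclideanSpace.single i₀ (1:ℝ)‖ *
            ((x i₀ + τ) / ‖x + τ • EuclideanSpace.single i₀ (1:ℝ)‖)) τ := by
      filter_upwards [hae] with x hx τ _
      have hr : 0 < ‖x + τ • EuclideanSpace.single i₀ (1:ℝ)‖ := norm_pos_iff.mpr (hx τ)
      have hn := aux_hasDerivAt_norm i₀ x τ hr.ne'
      have hWd : HasDerivAt W (deriv W ‖x + τ • EuclideanSpace.single i₀ (1:ℝ)‖)
          ‖x + τ • EuclideanSpace.single i₀ (1:ℝ)‖ := by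
        have hdw := (hW_C1.differentiableOn one_ne_zero) _ (mem_Ioi.mpr hr)
        exact (hdw.differentiableAt (Ioi_mem_nhds hr)).hasDerivAt
      have hcomp := (hWd.comp τ hn).const_mul (f (W ‖x‖))
      exact hcomp.congr_deriv (by ring)
    exact (hasDerivAt_integral_of_dominated_loc_of_deriv_le (Metric.ball_mem_nhds ρ one_pos) h1 h2 (hmeasF' ρ)
      h4 h5 h6).2
  · -- Part 2 : limit of the normalized derivative
    have hrw : ∀ ρ : ℝ, (∫ x : EuclideanSpace ℝ (Fin N),
        f (W ‖x‖) * deriv W ‖x + ρ • EuclideanSpace.single i₀ (1:ℝ)‖ *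
          ((x i₀ + ρ) / ‖x + ρ • EuclideanSpace.single i₀ (1:ℝ)‖)) / deriv W ρ
        = ∫ x : EuclideanSpace ℝ (Fin N),
          (f (W ‖x‖) * deriv W ‖x + ρ • EuclideanSpace.single i₀ (1:ℝ)‖ *
            ((x i₀ + ρ) / ‖x + ρ • EuclideanSpace.single i₀ (1:ℝ)‖)) / deriv W ρ :=
      fun ρ => (integral_div _ _).symm
    simp only [hrw]
    set M : ℝ := max (4 * (2:ℝ) ^ α * C₁) (2*C'*C₁/A) with hMdef
    have h2α : (0:ℝ) < (2:ℝ) ^ α := Real.rpow_pos_of_pos (by norm_num) α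
    have hM : 0 < M := lt_of_lt_of_le (by positivity) (le_max_left _ _)
    have hmeas2 : ∀ᶠ ρ : ℝ in atTop, AEStronglyMeasurable
        (fun x : EuclideanSpace ℝ (Fin N) =>
          (f (W ‖x‖) * deriv W ‖x + ρ • EuclideanSpace.single i₀ (1:ℝ)‖ *
            ((x i₀ + ρ) / ‖x + ρ • EuclideanSpace.single i₀ (1:ℝ)‖)) / deriv W ρ) volume :=
      by
      refine Eventually.of_forall fun ρ => ?_
      have h := (hmeasF' ρ).mul_const (deriv W ρ)⁻¹
      simpa [div_eq_mul_inv] using h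
    have hbint : Integrable (fun x : EuclideanSpace ℝ (Fin N) =>
        M * Real.exp (-(σ/2 * ‖x‖))) volume := (hInt (σ/2) (by linarith)).const_mul M
    -- pointwise limit
    have hlim : ∀ᵐ x : EuclideanSpace ℝ (Fin N) ∂volume, Tendsto (fun ρ : ℝ =>
        (f (W ‖x‖) * deriv W ‖x + ρ • EuclideanSpace.single i₀ (1:ℝ)‖ *
          ((x i₀ + ρ) / ‖x + ρ • EuclideanSpace.single i₀ (1:ℝ)‖)) / deriv W ρ)
        atTop (nhds (f (W ‖x‖) * Real.exp (-(x i₀)))) := by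
      apply ae_of_all
      intro x
      have hxb : |x i₀| ≤ ‖x‖ := by
        have := aux_coord_le i₀ x 0
        simpa using this
      have hdabs : ∀ ρ : ℝ, 0 ≤ ρ →
          |‖x + ρ • EuclideanSpace.single i₀ (1:ℝ)‖ - ρ| ≤ ‖x‖ := by
        intro ρ hρ
        rw [abs_le]
        constructor
        · linarith [aux_norm_lb i₀ x ρ hρ]
        · have h1 := norm_add_le x (ρ • EuclideanSpace.single i₀ (1:ℝ))
          rw [norm_smul, EuclideanSpace.norm_single, Real.norm_eq_abs, norm_one,
            abs_of_nonneg hρ] at h1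
          linarith
      have hrt : Tendsto (fun ρ : ℝ => ‖x + ρ • EuclideanSpace.single i₀ (1:ℝ)‖)
          atTop atTop := by
        refine tendsto_atTop_mono' atTop ?_
          (tendsto_atTop_add_const_right atTop (-‖x‖) tendsto_id)
        filter_upwards [eventually_ge_atTop (0:ℝ)] with ρ hρ
        have := aux_norm_lb i₀ x ρ hρ
        simpa [sub_eq_add_neg] using this
      have hd : Tendsto (fun ρ : ℝ => ‖x + ρ • EuclideanSpace.single i₀ (1:ℝ)‖ - ρ)
          atTop (nhds (x i₀)) := by
        have habs0 : Tendsto (fun ρ : ℝ =>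
            |(‖x + ρ • EuclideanSpace.single i₀ (1:ℝ)‖ - ρ) - x i₀|) atTop (nhds 0) := by
          apply squeeze_zero' (Eventually.of_forall fun ρ => abs_nonneg _)
            (g := fun ρ : ℝ => 2*‖x‖^2/ρ)
          · filter_upwards [eventually_gt_atTop (0:ℝ)] with ρ hρ
            set r := ‖x + ρ • EuclideanSpace.single i₀ (1:ℝ)‖ with hrdef
            have hr0 : 0 ≤ r := norm_nonneg _
            have hsq : r^2 = ‖x‖^2 + 2*ρ*(x i₀) + ρ^2 := aux_normsq i₀ x ρ
            have heq : ((r - ρ) - x i₀) * (r + ρ) = ‖x‖^2 - (x i₀) * (r - ρ) := by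
              linear_combination hsq
            have hdab := hdabs ρ hρ.le
            have h1 : |(r - ρ) - x i₀| * (r + ρ) ≤ 2*‖x‖^2 := by
              have h2 : |(r - ρ) - x i₀| * (r + ρ) = |((r - ρ) - x i₀) * (r + ρ)| := by
                rw [abs_mul, abs_of_pos (by linarith : (0:ℝ) < r + ρ)]
              rw [h2, heq]
              have h3 : |‖x‖^2 - (x i₀) * (r - ρ)| ≤ ‖x‖^2 + |x i₀| * |r - ρ| := by
                calc |‖x‖^2 - (x i₀) * (r - ρ)| ≤ |‖x‖^2| + |(x i₀) * (r - ρ)| :=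
                      abs_sub _ _
                  _ = ‖x‖^2 + |x i₀| * |r - ρ| := by rw [abs_mul, abs_of_nonneg (by positivity)]
              nlinarith [abs_nonneg (x i₀), abs_nonneg (r - ρ), norm_nonneg x]
            rw [le_div_iff₀ hρ]
            nlinarith [abs_nonneg ((r - ρ) - x i₀), hr0]
          · have : Tendsto (fun ρ : ℝ => 2*‖x‖^2/ρ) atTop (nhds 0) :=
              Tendsto.div_atTop tendsto_const_nhds tendsto_id
            exact this
        have habs1 := (tendsto_zero_iff_abs_tendsto_zero
          (fun ρ : ℝ => (‖x + ρ • EuclideanSpace.single i₀ (1:ℝ)‖ - ρ) - x i₀)).mpr habs0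
        have := habs1.add_const (x i₀)
        simpa using this
      have hroverρ : Tendsto (fun ρ : ℝ => ‖x + ρ • EuclideanSpace.single i₀ (1:ℝ)‖ / ρ)
          atTop (nhds 1) := by
        have h1 : Tendsto (fun ρ : ℝ =>
            (‖x + ρ • EuclideanSpace.single i₀ (1:ℝ)‖ - ρ) / ρ) atTop (nhds 0) :=
          hd.div_atTop tendsto_id
        have h2 := h1.add_const 1
        rw [zero_add] at h2
        apply h2.congr'
        filter_upwards [eventually_gt_atTop (0:ℝ)] with ρ hρ
        field_simp
        ring
      have hρoverr : Tendsto (fun ρ : ℝ => ρ / ‖x + ρ • EuclideanSpace.single i₀ (1:ℝ)‖)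
          atTop (nhds 1) := by
        have h1 := hroverρ.inv₀ one_ne_zero
        rw [inv_one] at h1
        apply h1.congr
        intro ρ
        rw [inv_div]
      have hrpos : ∀ᶠ ρ : ℝ in atTop, 0 < ‖x + ρ • EuclideanSpace.single i₀ (1:ℝ)‖ := by
        filter_upwards [eventually_gt_atTop (max ‖x‖ 0)] with ρ hρ
        rw [max_lt_iff] at hρ
        linarith [aux_norm_lb i₀ x ρ hρ.2.le]
      have hq1 : Tendsto (fun ρ : ℝ =>
          (x i₀ + ρ) / ‖x + ρ • EuclideanSpace.single i₀ (1:ℝ)‖) atTop (nhds 1) := by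
        have h1 : Tendsto (fun ρ : ℝ => (x i₀ + ρ) / ρ) atTop (nhds 1) := by
          have h2 : Tendsto (fun ρ : ℝ => x i₀ / ρ) atTop (nhds 0) :=
            Tendsto.div_atTop tendsto_const_nhds tendsto_id
          have h3 := h2.add_const 1
          rw [zero_add] at h3
          apply h3.congr'
          filter_upwards [eventually_gt_atTop (0:ℝ)] with ρ hρ
          field_simp
        have h2 := h1.mul hρoverr
        rw [one_mul] at h2
        apply h2.congr'
        filter_upwards [hrpos, eventually_gt_atTop (0:ℝ)] with ρ hr hρ
        field_simp
      have hP1 : Tendsto (fun ρ : ℝ =>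
          (‖x + ρ • EuclideanSpace.single i₀ (1:ℝ)‖ ^ α *
            Real.exp ‖x + ρ • EuclideanSpace.single i₀ (1:ℝ)‖ *
            deriv W ‖x + ρ • EuclideanSpace.single i₀ (1:ℝ)‖) /
          (ρ ^ α * Real.exp ρ * deriv W ρ)) atTop (nhds 1) := by
        have h1 := (hW'_asym.comp hrt).div hW'_asym (neg_ne_zero.mpr hA.ne')
        have h2 : (-A) / (-A) = (1:ℝ) := div_self (neg_ne_zero.mpr hA.ne')
        rw [h2] at h1
        exact h1
      have hpow1 : Tendsto (fun ρ : ℝ =>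
          (ρ / ‖x + ρ • EuclideanSpace.single i₀ (1:ℝ)‖) ^ α) atTop (nhds 1) := by
        have hcont : ContinuousAt (fun t : ℝ => t ^ α) 1 :=
          Real.continuousAt_rpow_const 1 α (Or.inl one_ne_zero)
        have := hcont.tendsto.comp hρoverr
        simpa [Real.one_rpow, Function.comp_def] using this
      have hexp1 : Tendsto (fun ρ : ℝ =>
          Real.exp ρ / Real.exp ‖x + ρ • EuclideanSpace.single i₀ (1:ℝ)‖) atTop
          (nhds (Real.exp (-(x i₀)))) := by
        have h1 : Tendsto (fun ρ : ℝ => ρ - ‖x + ρ • EuclideanSpace.single i₀ (1:ℝ)‖)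
            atTop (nhds (-(x i₀))) := by
          have := hd.neg
          simpa [neg_sub] using this
        have h2 := (Real.continuous_exp.tendsto _).comp h1
        apply h2.congr
        intro ρ
        exact Real.exp_sub _ _
      have hratio : Tendsto (fun ρ : ℝ =>
          deriv W ‖x + ρ • EuclideanSpace.single i₀ (1:ℝ)‖ / deriv W ρ) atTop
          (nhds (Real.exp (-(x i₀)))) := by
        have hmul := (hP1.mul hpow1).mul hexp1
        rw [one_mul, one_mul] at hmul
        apply hmul.congr'
        filter_upwards [hrpos, eventually_gt_atTop (0:ℝ)] with ρ hr hρ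
        set r := ‖x + ρ • EuclideanSpace.single i₀ (1:ℝ)‖ with hrdef
        have hra : (0:ℝ) < r ^ α := Real.rpow_pos_of_pos hr α
        have hρa : (0:ℝ) < ρ ^ α := Real.rpow_pos_of_pos hρ α
        have hre : (0:ℝ) < Real.exp r := Real.exp_pos r
        have hρe : (0:ℝ) < Real.exp ρ := Real.exp_pos ρ
        have hdivpow : (ρ / r) ^ α = ρ ^ α / r ^ α := Real.div_rpow hρ.le hr.le α
        rcases eq_or_ne (deriv W ρ) 0 with hv | hv
        · simp [hv]
        · rw [hdivpow]
          field_simp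
      have hfinal := (Tendsto.mul (tendsto_const_nhds (x := f (W ‖x‖))) hratio).mul hq1
      rw [mul_one] at hfinal
      apply hfinal.congr
      intro ρ
      ring
    -- uniform bound
    have hbound2 : ∀ᶠ ρ : ℝ in atTop, ∀ᵐ x : EuclideanSpace ℝ (Fin N) ∂volume,
        ‖(f (W ‖x‖) * deriv W ‖x + ρ • EuclideanSpace.single i₀ (1:ℝ)‖ *
          ((x i₀ + ρ) / ‖x + ρ • EuclideanSpace.single i₀ (1:ℝ)‖)) / deriv W ρ‖
          ≤ M * Real.exp (-(σ/2 * ‖x‖)) := by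
      have hQ : ∀ᶠ ρ : ℝ in atTop, ρ ^ α * Real.exp (-(σ/4) * ρ) ≤ 1 := by
        have h1 := tendsto_rpow_mul_exp_neg_mul_atTop_nhds_zero α (σ/4) (by linarith)
        filter_upwards [h1.eventually_lt_const (by norm_num : (0:ℝ) < 1)] with ρ h
        exact h.le
      filter_upwards [hQ, eventually_ge_atTop (2*R₀), eventually_ge_atTop (1:ℝ)]
        with ρ hQρ hρ2R hρ1
      have hρpos : (0:ℝ) < ρ := by linarith
      have hρR : R₀ ≤ ρ := by linarith
      have hDlow := hW'lb ρ hρR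
      have hρa : (0:ℝ) < ρ ^ (-α) := Real.rpow_pos_of_pos hρpos (-α)
      have hDpos : (0:ℝ) < (A/2) * (ρ ^ (-α) * Real.exp (-ρ)) := by positivity
      have hWρpos : (0:ℝ) < |deriv W ρ| := lt_of_lt_of_le hDpos hDlow
      apply ae_of_all
      intro x
      have hr0 : (0:ℝ) ≤ ‖x + ρ • EuclideanSpace.single i₀ (1:ℝ)‖ := norm_nonneg _
      rcases eq_or_lt_of_le hr0 with hr | hr
      · rw [Real.norm_eq_abs, ← hr]
        simp only [div_zero, mul_zero, zero_div, abs_zero]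
        positivity
      · set r := ‖x + ρ • EuclideanSpace.single i₀ (1:ℝ)‖ with hrdef
        have hq : |(x i₀ + ρ) / r| ≤ 1 := by
          rw [abs_div, abs_of_pos hr, div_le_one hr]
          exact aux_coord_le i₀ x ρ
        have hxlb : ρ - ‖x‖ ≤ r := aux_norm_lb i₀ x ρ hρpos.le
        have hfx := hfw x
        have hmaster : ‖(f (W ‖x‖) * deriv W r * ((x i₀ + ρ) / r)) / deriv W ρ‖
            ≤ |f (W ‖x‖)| * |deriv W r| / |deriv W ρ| := by
          rw [Real.norm_eq_abs, abs_div, abs_mul, abs_mul]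
          have hnum : |f (W ‖x‖)| * |deriv W r| * |(x i₀ + ρ) / r|
              ≤ |f (W ‖x‖)| * |deriv W r| :=
            mul_le_of_le_one_right (by positivity) hq
          exact (div_le_div_iff_of_pos_right hWρpos).mpr hnum
        have hfxpos : (0:ℝ) ≤ C₁ * Real.exp (-((1+σ)*‖x‖)) :=
          (mul_pos hC₁ (Real.exp_pos _)).le
        rcases le_or_gt (ρ/2) r with hcase | hcase
        · -- Case A : r ≥ ρ/2
          have hrR : R₀ ≤ r := by linarith
          have hr1 : r ^ (-α) ≤ ((ρ/2 : ℝ)) ^ (-α) :=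
            Real.rpow_le_rpow_of_nonpos (by linarith) hcase (by linarith)
          have hsplit : ((ρ/2 : ℝ)) ^ (-α) = ρ ^ (-α) * (2:ℝ) ^ α := by
            rw [Real.div_rpow hρpos.le (by norm_num : (0:ℝ) ≤ 2),
              Real.rpow_neg (show (0:ℝ) ≤ 2 by norm_num), div_inv_eq_mul]
          have hWr2 : |deriv W r| ≤ (3*A/2) * (ρ ^ (-α) * (2:ℝ) ^ α * Real.exp (-r)) := by
            calc |deriv W r| ≤ 3*A/2 * (r ^ (-α) * Real.exp (-r)) := hW'ub r hrR
              _ ≤ 3*A/2 * (((ρ/2 : ℝ)) ^ (-α) * Real.exp (-r)) :=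
                  mul_le_mul_of_nonneg_left
                    (mul_le_mul_of_nonneg_right hr1 (Real.exp_nonneg _)) (by linarith)
              _ = (3*A/2) * (ρ ^ (-α) * (2:ℝ) ^ α * Real.exp (-r)) := by rw [hsplit]
          have hWr2pos : (0:ℝ) ≤ (3*A/2) * (ρ ^ (-α) * (2:ℝ) ^ α * Real.exp (-r)) :=
            mul_nonneg (by linarith)
              (mul_nonneg (mul_nonneg hρa.le h2α.le) (Real.exp_nonneg _))
          have hnum2 : |f (W ‖x‖)| * |deriv W r| ≤ (C₁ * Real.exp (-((1+σ)*‖x‖))) *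
              ((3*A/2) * (ρ ^ (-α) * (2:ℝ) ^ α * Real.exp (-r))) :=
            mul_le_mul hfx hWr2 (abs_nonneg _) hfxpos
          have hexpeq : Real.exp (-((1+σ)*‖x‖)) * (Real.exp (-r) / Real.exp (-ρ))
              = Real.exp (-((1+σ)*‖x‖) + (ρ - r)) := by
            rw [← Real.exp_sub, ← Real.exp_add]
            ring_nf
          have hstep : (C₁ * Real.exp (-((1+σ)*‖x‖))) *
              ((3*A/2) * (ρ ^ (-α) * (2:ℝ) ^ α * Real.exp (-r))) /
              ((A/2) * (ρ ^ (-α) * Real.exp (-ρ)))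
              = 3 * (2:ℝ) ^ α * C₁ *
                (Real.exp (-((1+σ)*‖x‖)) * (Real.exp (-r) / Real.exp (-ρ))) := by
            field_simp
          calc ‖(f (W ‖x‖) * deriv W r * ((x i₀ + ρ) / r)) / deriv W ρ‖
              ≤ |f (W ‖x‖)| * |deriv W r| / |deriv W ρ| := hmaster
            _ ≤ (C₁ * Real.exp (-((1+σ)*‖x‖))) *
                  ((3*A/2) * (ρ ^ (-α) * (2:ℝ) ^ α * Real.exp (-r))) /
                  ((A/2) * (ρ ^ (-α) * Real.exp (-ρ))) :=
                div_le_div₀ (mul_nonneg hfxpos hWr2pos) hnum2 hDpos hDlow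
            _ = 3 * (2:ℝ) ^ α * C₁ *
                  (Real.exp (-((1+σ)*‖x‖)) * (Real.exp (-r) / Real.exp (-ρ))) := hstep
            _ = 3 * (2:ℝ) ^ α * C₁ * Real.exp (-((1+σ)*‖x‖) + (ρ - r)) := by rw [hexpeq]
            _ ≤ 3 * (2:ℝ) ^ α * C₁ * Real.exp (-(σ/2 * ‖x‖)) := by
                refine mul_le_mul_of_nonneg_left (Real.exp_le_exp.mpr ?_)
                  (by nlinarith)
                nlinarith [norm_nonneg x, mul_nonneg hσ.le (norm_nonneg x)]
            _ ≤ M * Real.exp (-(σ/2 * ‖x‖)) := by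
                refine mul_le_mul_of_nonneg_right ?_ (Real.exp_nonneg _)
                refine le_trans ?_ (le_max_left _ _)
                nlinarith
        · -- Case B : r < ρ/2
          have hWr2 : |deriv W r| ≤ C' * Real.exp (-r) := hC' r hr
          have hnum2 : |f (W ‖x‖)| * |deriv W r| ≤
              (C₁ * Real.exp (-((1+σ)*‖x‖))) * (C' * Real.exp (-r)) :=
            mul_le_mul hfx hWr2 (abs_nonneg _) hfxpos
          have hραinv : (ρ:ℝ) ^ (-α) = (ρ ^ α)⁻¹ := Real.rpow_neg hρpos.le α
          have hρα : (0:ℝ) < ρ ^ α := Real.rpow_pos_of_pos hρpos α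
          have hstep : (C₁ * Real.exp (-((1+σ)*‖x‖))) * (C' * Real.exp (-r)) /
              ((A/2) * (ρ ^ (-α) * Real.exp (-ρ)))
              = (2*C'*C₁/A) * (ρ ^ α *
                (Real.exp (-((1+σ)*‖x‖)) * Real.exp (-r) / Real.exp (-ρ))) := by
            rw [hραinv]
            field_simp
          have hexps : Real.exp (-((1+σ)*‖x‖)) * Real.exp (-r) / Real.exp (-ρ)
              = Real.exp (ρ - r - (1+σ)*‖x‖) := by
            rw [← Real.exp_add, ← Real.exp_sub]
            ring_nf
          have hTle : Real.exp (ρ - r - (1+σ)*‖x‖)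
              ≤ Real.exp (-(σ/4)*ρ) * Real.exp (-(σ/2 * ‖x‖)) := by
            rw [← Real.exp_add]
            apply Real.exp_le_exp.mpr
            nlinarith [mul_le_mul_of_nonneg_left (show ρ - r ≤ ‖x‖ by linarith) hσ.le,
              mul_le_mul_of_nonneg_left (show ρ/2 ≤ ρ - r by linarith) hσ.le]
          have hCC : (0:ℝ) < 2*C'*C₁/A := by positivity
          calc ‖(f (W ‖x‖) * deriv W r * ((x i₀ + ρ) / r)) / deriv W ρ‖
              ≤ |f (W ‖x‖)| * |deriv W r| / |deriv W ρ| := hmaster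
            _ ≤ (C₁ * Real.exp (-((1+σ)*‖x‖))) * (C' * Real.exp (-r)) /
                  ((A/2) * (ρ ^ (-α) * Real.exp (-ρ))) :=
                div_le_div₀ (mul_nonneg hfxpos
                  (mul_nonneg hC'0.le (Real.exp_nonneg _))) hnum2 hDpos hDlow
            _ = (2*C'*C₁/A) * (ρ ^ α *
                  (Real.exp (-((1+σ)*‖x‖)) * Real.exp (-r) / Real.exp (-ρ))) := hstep
            _ = (2*C'*C₁/A) * (ρ ^ α * Real.exp (ρ - r - (1+σ)*‖x‖)) := by rw [hexps]
            _ ≤ (2*C'*C₁/A) * (ρ ^ α * (Real.exp (-(σ/4)*ρ) * Real.exp (-(σ/2 * ‖x‖)))) :=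
                mul_le_mul_of_nonneg_left (mul_le_mul_of_nonneg_left hTle hρα.le) hCC.le
            _ = (2*C'*C₁/A) * (ρ ^ α * Real.exp (-(σ/4)*ρ)) * Real.exp (-(σ/2 * ‖x‖)) := by
                ring
            _ ≤ (2*C'*C₁/A) * 1 * Real.exp (-(σ/2 * ‖x‖)) :=
                mul_le_mul_of_nonneg_right (mul_le_mul_of_nonneg_left hQρ hCC.le)
                  (Real.exp_nonneg _)
            _ ≤ M * Real.exp (-(σ/2 * ‖x‖)) := by
                refine mul_le_mul_of_nonneg_right ?_ (Real.exp_nonneg _)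
                rw [mul_one]
                exact le_max_right _ _

    exact tendsto_integral_filter_of_dominated_convergence _ hmeas2 hbound2 hbint hlim


end

theorem interaction_integral_derivative_limit
    (N : ℕ) (hN : 2 ≤ N)
    (W : ℝ → ℝ) (hW_cont : ContinuousOn W (Ici 0))
    (hW_pos : ∀ r ∈ Ici (0 : ℝ), 0 < W r)
    (hW_C1 : ContDiffOn ℝ 1 W (Ioi 0))
    (hW'_bdd : ∃ C, ∀ r ∈ Ioi (0 : ℝ), |deriv W r| ≤ C)
    (A : ℝ) (hA : 0 < A)
    (hW_asym : Tendsto (fun r => r ^ (((N : ℝ) - 1) / 2) * Real.exp r * W r)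
      atTop (nhds A))
    (hW'_asym : Tendsto (fun r => r ^ (((N : ℝ) - 1) / 2) * Real.exp r * deriv W r)
      atTop (nhds (-A)))
    (w : EuclideanSpace ℝ (Fin N) → ℝ) (hw : ∀ x, w x = W ‖x‖)
    (f : ℝ → ℝ) (hf_cont : Continuous f)
    (C₀ σ : ℝ) (hC₀ : 0 < C₀) (hσ : 0 < σ)
    (hf_bound : ∀ t : ℝ, |t| ≤ sSup (W '' Ici 0) → |f t| ≤ C₀ * |t| ^ (1 + σ)) :
    (∀ ρ : ℝ, 0 < ρ →
      HasDerivAt (fun τ : ℝ =>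
          ∫ x : EuclideanSpace ℝ (Fin N),
            f (w x) * w (x + τ • EuclideanSpace.single (⟨0, by omega⟩ : Fin N) 1))
        (∫ x : EuclideanSpace ℝ (Fin N),
          f (w x) * deriv W ‖x + ρ • EuclideanSpace.single (⟨0, by omega⟩ : Fin N) 1‖ *
            ((x ⟨0, by omega⟩ + ρ) /
              ‖x + ρ • EuclideanSpace.single (⟨0, by omega⟩ : Fin N) 1‖)) ρ) ∧
    Tendsto (fun ρ : ℝ =>
        (∫ x : EuclideanSpace ℝ (Fin N),
          f (w x) * deriv W ‖x + ρ • EuclideanSpace.single (⟨0, by omega⟩ : Fin N) 1‖ *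
            ((x ⟨0, by omega⟩ + ρ) /
              ‖x + ρ • EuclideanSpace.single (⟨0, by omega⟩ : Fin N) 1‖)) / deriv W ρ)
      atTop
      (nhds (∫ x : EuclideanSpace ℝ (Fin N),
        f (w x) * Real.exp (-(x ⟨0, by omega⟩)))) := by
  exact main_aux N hN ⟨0, by omega⟩ W hW_cont hW_pos hW_C1 hW'_bdd A hA hW_asym hW'_asym
    w hw f hf_cont C₀ σ hC₀ hσ hf_bound
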